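/- Let α, β > −1 and n ≥ 1. Then the structure relation (1−x²) (d/dx) P_n^{(α,β)}(x) − (1/2)(α−β+(α+β+2)x) P_n^{(α,β)}(x) = −[(n+1)(n+α+β+1)/(2n+α+β+1)] P_{n+1}^{(α,β)}(x) + [(n+α)(n+β)/(2n+α+β+1)] P_{n−1}^{(α,β)}(x) holds identically in x. -/

import Mathlib

open Polynomial

/-- Generalized binomial coefficient `C(a, j) = a(a-1)⋯(a-j+1)/j!` for real `a`. -/
noncomputable def genBinom (a : ℝ) (j : ℕ) : ℝ :=
  (∏ i ∈ Finset.range j, (a - i)) / (j.factorial : ℝ)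

/-- The Jacobi polynomial
`P_n^{(α,β)}(x) = Σ_{k=0}^{n} C(n+α, n-k) C(n+β, k) ((x-1)/2)^k ((x+1)/2)^{n-k}`. -/
noncomputable def jacobiP (α β : ℝ) (n : ℕ) : ℝ[X] :=
  ∑ k ∈ Finset.range (n + 1),
    C (genBinom ((n : ℝ) + α) (n - k) * genBinom ((n : ℝ) + β) k) *
      (C (1 / 2) * (X - 1)) ^ k * (C (1 / 2) * (X + 1)) ^ (n - k)

open Finset

/-- The coefficient of `((x-1)/2)^k ((x+1)/2)^{n-k}` in `P_n^{(α,β)}`. -/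
noncomputable def ap (α β : ℝ) (n k : ℕ) : ℝ :=
  genBinom ((n:ℝ)+α) (n-k) * genBinom ((n:ℝ)+β) k

lemma eval_jacobiP (α β : ℝ) (n : ℕ) (x : ℝ) :
    (jacobiP α β n).eval x
      = ∑ k ∈ range (n+1), ap α β n k * ((x-1)/2)^k * ((x+1)/2)^(n-k) := by
  simp only [jacobiP, eval_finset_sum, eval_mul, eval_pow, eval_C, eval_X, eval_sub, eval_add,
    eval_one, ap]
  refine Finset.sum_congr rfl fun k _ => ?_
  ring

lemma eval_deriv_jacobiP (α β : ℝ) (n : ℕ) (x : ℝ) :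
    (derivative (jacobiP α β n)).eval x
      = ∑ k ∈ range (n+1), ap α β n k *
          ((k:ℝ) * (1/2) * ((x-1)/2)^(k-1) * ((x+1)/2)^(n-k)
            + ((n-k : ℕ):ℝ) * (1/2) * ((x-1)/2)^k * ((x+1)/2)^(n-k-1)) := by
  simp only [jacobiP, derivative_sum, derivative_mul, derivative_pow, derivative_C,
    derivative_X, derivative_sub, derivative_add, derivative_one, eval_finset_sum,
    eval_mul, eval_pow, eval_C, eval_X, eval_sub, eval_add, eval_one, eval_natCast,
    eval_zero, zero_mul, mul_zero, ap]
  refine Finset.sum_congr rfl fun k _ => ?_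
  ring

lemma prod_sub_succ (a : ℝ) (j : ℕ) :
    ∏ i ∈ range (j+1), (a - (i:ℝ)) = (∏ i ∈ range j, (a - i)) * (a - j) :=
  Finset.prod_range_succ _ _

lemma prod_sub_shift (a : ℝ) (j : ℕ) :
    ∏ i ∈ range (j+1), (a + 1 - (i:ℝ)) = (a + 1) * ∏ i ∈ range j, (a - i) := by
  rw [Finset.prod_range_succ']
  push_cast
  rw [sub_zero, mul_comm]
  congr 1
  refine Finset.prod_congr rfl fun i _ => ?_
  push_cast; ring

lemma gb_zero (a : ℝ) : genBinom a 0 = 1 := by simp [genBinom]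

lemma gb_one (a : ℝ) : genBinom a 1 = a := by simp [genBinom]

lemma gb_s (a : ℝ) (m : ℕ) :
    genBinom a (m+1) = genBinom a m * (a - m) / ((m:ℝ)+1) := by
  rw [genBinom, genBinom, prod_sub_succ, Nat.factorial_succ]
  push_cast
  rw [mul_comm ((m:ℝ)+1) (m.factorial:ℝ), ← div_div]
  ring

lemma gb_sh (a : ℝ) (m : ℕ) :
    genBinom (a+1) (m+1) = (a+1) * genBinom a m / ((m:ℝ)+1) := by
  rw [genBinom, genBinom, prod_sub_shift, Nat.factorial_succ]
  push_cast
  rw [mul_comm ((m:ℝ)+1) (m.factorial:ℝ), ← div_div]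
  ring

lemma gb_s2 (a : ℝ) (m : ℕ) :
    genBinom a (m+2) = genBinom a m * (a - m) * (a - m - 1) / ((m:ℝ)+1) / ((m:ℝ)+2) := by
  rw [show m+2 = (m+1)+1 from rfl, gb_s a (m+1), gb_s a m]
  push_cast; ring

lemma gb_sh2 (a : ℝ) (m : ℕ) :
    genBinom (a+1) (m+2) = (a+1) * genBinom a m * (a - m) / ((m:ℝ)+1) / ((m:ℝ)+2) := by
  rw [show m+2 = (m+1)+1 from rfl, gb_sh a (m+1), gb_s a m]
  push_cast; ring

lemma gb_shsh2 (a : ℝ) (m : ℕ) :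
    genBinom (a+2) (m+2) = (a+2) * (a+1) * genBinom a m / ((m:ℝ)+1) / ((m:ℝ)+2) := by
  rw [show m+2 = (m+1)+1 from rfl, show (a+2) = (a+1)+1 from by ring, gb_sh (a+1) (m+1), gb_sh a m]
  push_cast; ring

set_option maxHeartbeats 1000000 in
lemma core4 (α β : ℝ) (m j : ℕ) :
    (2*((m:ℝ)+j+3)+α+β+1) *
        (ap α β (m+j+3) (j+2) * (2*((j:ℝ)+2)+α+1)
          + ap α β (m+j+3) (j+1) * (2*((m:ℝ)+2)+β+1))
      = (((m:ℝ)+j+3)+1)*(((m:ℝ)+j+3)+α+β+1)*ap α β (m+j+3+1) (j+2)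
        - (((m:ℝ)+j+3)+α)*(((m:ℝ)+j+3)+β)*
            (ap α β (m+j+2) (j+2) - 2*ap α β (m+j+2) (j+1) + ap α β (m+j+2) j) := by
  simp only [ap]
  rw [show m+j+3-(j+2) = m+1 from by omega, show m+j+3-(j+1) = m+2 from by omega,
    show m+j+3+1-(j+2) = m+2 from by omega, show m+j+2-(j+2) = m from by omega,
    show m+j+2-(j+1) = m+1 from by omega, show m+j+2-j = m+2 from by omega]
  simp only [show ((m+j+3:ℕ):ℝ)+α = (((m+j+2:ℕ):ℝ)+α)+1 from by push_cast; ring,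
    show ((m+j+3:ℕ):ℝ)+β = (((m+j+2:ℕ):ℝ)+β)+1 from by push_cast; ring,
    show ((m+j+3+1:ℕ):ℝ)+α = (((m+j+2:ℕ):ℝ)+α)+2 from by push_cast; ring,
    show ((m+j+3+1:ℕ):ℝ)+β = (((m+j+2:ℕ):ℝ)+β)+2 from by push_cast; ring]
  simp only [gb_shsh2, gb_sh2, gb_sh]
  simp only [gb_s2, gb_s]
  have h1 : ((m:ℝ)+1) ≠ 0 := by positivity
  have h2 : ((m:ℝ)+2) ≠ 0 := by positivity
  have h3 : ((j:ℝ)+1) ≠ 0 := by positivity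
  have h4 : ((j:ℝ)+2) ≠ 0 := by positivity
  push_cast
  field_simp
  ring

set_option maxHeartbeats 1000000 in
lemma core0 (α β : ℝ) (m : ℕ) :
    (2*((m:ℝ)+1)+α+β+1) * (ap α β (m+1) 0 * (α+1))
      = (((m:ℝ)+1)+1)*(((m:ℝ)+1)+α+β+1)*ap α β (m+1+1) 0
        - (((m:ℝ)+1)+α)*(((m:ℝ)+1)+β)*ap α β m 0 := by
  simp only [ap, Nat.sub_zero, gb_zero, mul_one]
  simp only [show ((m+1:ℕ):ℝ)+α = (((m:ℕ):ℝ)+α)+1 from by push_cast; ring,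
    show ((m+1+1:ℕ):ℝ)+α = (((m:ℕ):ℝ)+α)+2 from by push_cast; ring]
  simp only [gb_shsh2, gb_sh]
  have h1 : ((m:ℝ)+1) ≠ 0 := by positivity
  have h2 : ((m:ℝ)+2) ≠ 0 := by positivity
  push_cast
  field_simp
  ring

set_option maxHeartbeats 1000000 in
lemma core1 (α β : ℝ) (m : ℕ) :
    (2*((m:ℝ)+2)+α+β+1) *
        (ap α β (m+2) 1 * (α+3) + ap α β (m+2) 0 * (2*((m:ℝ)+2)+β+1))
      = (((m:ℝ)+2)+1)*(((m:ℝ)+2)+α+β+1)*ap α β (m+2+1) 1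
        - (((m:ℝ)+2)+α)*(((m:ℝ)+2)+β)*(ap α β (m+1) 1 - 2*ap α β (m+1) 0) := by
  simp only [ap, Nat.sub_zero, gb_zero, gb_one, mul_one]
  rw [show m+2-1 = m+1 from by omega, show m+2+1-1 = m+2 from by omega,
    show m+1-1 = m from by omega]
  simp only [show ((m+2:ℕ):ℝ)+α = (((m+1:ℕ):ℝ)+α)+1 from by push_cast; ring,
    show ((m+2+1:ℕ):ℝ)+α = (((m+1:ℕ):ℝ)+α)+2 from by push_cast; ring]
  simp only [gb_shsh2, gb_sh2, gb_sh]
  simp only [gb_s2, gb_s]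
  have h1 : ((m:ℝ)+1) ≠ 0 := by positivity
  have h2 : ((m:ℝ)+2) ≠ 0 := by positivity
  push_cast
  field_simp
  ring

lemma core3 (α β : ℝ) :
    (2*(1:ℝ)+α+β+1) * (ap α β 1 1 * (α+3) + ap α β 1 0 * (β+3))
      = ((1:ℝ)+1)*((1:ℝ)+α+β+1)*ap α β 2 1
        - ((1:ℝ)+α)*((1:ℝ)+β)*(-2*ap α β 0 0) := by
  simp only [ap]
  norm_num [gb_zero, gb_one]
  ring

set_option maxHeartbeats 1000000 in
lemma core5 (α β : ℝ) (j : ℕ) :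
    (2*((j:ℝ)+2)+α+β+1) *
        (ap α β (j+2) (j+2) * (2*((j:ℝ)+2)+α+1) + ap α β (j+2) (j+1) * (β+3))
      = (((j:ℝ)+2)+1)*(((j:ℝ)+2)+α+β+1)*ap α β (j+2+1) (j+2)
        - (((j:ℝ)+2)+α)*(((j:ℝ)+2)+β)*
            (-2*ap α β (j+1) (j+1) + ap α β (j+1) j) := by
  simp only [ap]
  rw [show j+2-(j+2) = 0 from by omega, show j+2-(j+1) = 1 from by omega,
    show j+2+1-(j+2) = 1 from by omega, show j+1-(j+1) = 0 from by omega,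
    show j+1-j = 1 from by omega]
  simp only [gb_zero, gb_one, mul_one, one_mul]
  simp only [show ((j+2:ℕ):ℝ)+β = (((j+1:ℕ):ℝ)+β)+1 from by push_cast; ring,
    show ((j+2+1:ℕ):ℝ)+β = (((j+1:ℕ):ℝ)+β)+2 from by push_cast; ring]
  simp only [gb_shsh2, gb_sh2, gb_sh]
  simp only [gb_s2, gb_s]
  have h1 : ((j:ℝ)+1) ≠ 0 := by positivity
  have h2 : ((j:ℝ)+2) ≠ 0 := by positivity
  push_cast
  field_simp
  ring

set_option maxHeartbeats 1000000 in
lemma core6 (α β : ℝ) (j : ℕ) :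
    (2*((j:ℝ)+1)+α+β+1) * (ap α β (j+1) (j+1) * (β+1))
      = (((j:ℝ)+1)+1)*(((j:ℝ)+1)+α+β+1)*ap α β (j+1+1) (j+1+1)
        - (((j:ℝ)+1)+α)*(((j:ℝ)+1)+β)*ap α β j j := by
  simp only [ap]
  rw [show j+1-(j+1) = 0 from by omega, show j+1+1-(j+1+1) = 0 from by omega,
    show j-j = 0 from by omega]
  simp only [gb_zero, one_mul]
  simp only [show ((j+1:ℕ):ℝ)+β = (((j:ℕ):ℝ)+β)+1 from by push_cast; ring,
    show ((j+1+1:ℕ):ℝ)+β = (((j:ℕ):ℝ)+β)+2 from by push_cast; ring]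
  simp only [gb_shsh2, gb_sh]
  have h1 : ((j:ℝ)+1) ≠ 0 := by positivity
  have h2 : ((j:ℝ)+2) ≠ 0 := by positivity
  push_cast
  field_simp
  ring

set_option maxHeartbeats 1000000 in
lemma key_coeff (α β : ℝ) (n k : ℕ) (hn : 1 ≤ n) (hk : k < n+1+1) :
    (if k < n+1 then (2*(n:ℝ)+α+β+1) * (-(ap α β n k * (2*(k:ℝ)+α+1))) else 0)
      + (if 1 ≤ k ∧ k < (n+1)+1 then
          (2*(n:ℝ)+α+β+1) * (-(ap α β n (k-1) * (2*((n-(k-1):ℕ):ℝ)+β+1))) else 0)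
    = (-(((n:ℝ)+1)*((n:ℝ)+α+β+1))) * ap α β (n+1) k
      + (((n:ℝ)+α)*((n:ℝ)+β)) *
          ((if k < n then ap α β (n-1) k else 0)
            - 2*(if 1 ≤ k ∧ k < n+1 then ap α β (n-1) (k-1) else 0)
            + (if 2 ≤ k ∧ k < n+2 then ap α β (n-1) (k-2) else 0)) := by
  by_cases h0 : k = 0
  · subst h0
    obtain ⟨m, rfl⟩ : ∃ m, n = m+1 := ⟨n-1, by omega⟩
    split_ifs <;> try (exfalso; omega)
    rw [show m+1-1 = m from by omega]
    push_cast
    linear_combination (-1 : ℝ) * core0 α β m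
  by_cases h6 : k = n+1
  · subst h6
    obtain ⟨j, rfl⟩ : ∃ j, n = j+1 := ⟨n-1, by omega⟩
    split_ifs <;> try (exfalso; omega)
    rw [show j+1+1-1 = j+1 from by omega, show j+1-(j+1) = 0 from by omega,
      show j+1+1-2 = j from by omega, show j+1-1 = j from by omega]
    push_cast
    linear_combination (-1 : ℝ) * core6 α β j
  by_cases h5 : k = n
  · subst h5
    by_cases h3 : k = 1
    · subst h3
      split_ifs <;> try (exfalso; omega)
      norm_num
      push_cast
      linear_combination (-1 : ℝ) * core3 α β
    · obtain ⟨j, rfl⟩ : ∃ j, k = j+2 := ⟨k-2, by omega⟩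
      split_ifs <;> try (exfalso; omega)
      rw [show j+2-1 = j+1 from by omega, show j+2-(j+1) = 1 from by omega,
        show j+2-2 = j from by omega]
      push_cast
      linear_combination (-1 : ℝ) * core5 α β j
  by_cases h1 : k = 1
  · subst h1
    obtain ⟨m, rfl⟩ : ∃ m, n = m+2 := ⟨n-2, by omega⟩
    split_ifs <;> try (exfalso; omega)
    rw [show m+2-(1-1) = m+2 from by omega, show (1:ℕ)-1 = 0 from by omega,
      show m+2-1 = m+1 from by omega]
    push_cast
    linear_combination (-1 : ℝ) * core1 α β m
  · obtain ⟨j, rfl⟩ : ∃ j, k = j+2 := ⟨k-2, by omega⟩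
    obtain ⟨m, rfl⟩ : ∃ m, n = m+j+3 := ⟨n-j-3, by omega⟩
    split_ifs <;> try (exfalso; omega)
    rw [show j+2-1 = j+1 from by omega, show m+j+3-(j+1) = m+2 from by omega,
      show m+j+3-1 = m+j+2 from by omega, show j+2-2 = j from by omega]
    push_cast
    linear_combination (-1 : ℝ) * core4 α β m j

lemma pad_gen (t m s : ℕ) (h : m + s ≤ t) (F φ : ℕ → ℝ) :
    ∑ k ∈ range m, F k * φ (k+s) = ∑ k ∈ range t, (if s ≤ k ∧ k < m + s then F (k-s) else 0) * φ k := by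
  have h1 : ∀ k, (if s ≤ k ∧ k < m+s then F (k-s) else 0) * φ k
      = if s ≤ k ∧ k < m+s then F (k-s) * φ k else 0 := by
    intro k; split <;> simp
  rw [Finset.sum_congr rfl fun k _ => h1 k, ← Finset.sum_filter]
  have h2 : (range t).filter (fun k => s ≤ k ∧ k < m+s) = Finset.Ico s (m+s) := by
    ext k; simp only [Finset.mem_filter, Finset.mem_range, Finset.mem_Ico]; omega
  rw [h2, Finset.sum_Ico_eq_sum_range]
  rw [show m+s-s = m from by omega]
  refine Finset.sum_congr rfl fun i _ => ?_
  rw [show s+i-s = i from by omega, show s+i = i+s from by omega]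

lemma pad0 (u v : ℝ) (n m : ℕ) (h : m ≤ n+1+1) (F : ℕ → ℝ) :
    ∑ k ∈ range m, F k * (u^k * v^(n+1-k))
      = ∑ k ∈ range (n+1+1), (if k < m then F k else 0) * (u^k * v^(n+1-k)) := by
  have := pad_gen (n+1+1) m 0 (by omega) F (fun k => u^k * v^(n+1-k))
  simpa using this

lemma pad1 (u v : ℝ) (n m : ℕ) (h : m + 1 ≤ n+1+1) (F : ℕ → ℝ) :
    ∑ k ∈ range m, F k * (u^(k+1) * v^(n+1-(k+1)))
      = ∑ k ∈ range (n+1+1), (if 1 ≤ k ∧ k < m+1 then F (k-1) else 0) * (u^k * v^(n+1-k)) :=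
  pad_gen (n+1+1) m 1 h F (fun k => u^k * v^(n+1-k))

lemma pad2 (u v : ℝ) (n m : ℕ) (h : m + 2 ≤ n+1+1) (F : ℕ → ℝ) :
    ∑ k ∈ range m, F k * (u^(k+2) * v^(n+1-(k+2)))
      = ∑ k ∈ range (n+1+1), (if 2 ≤ k ∧ k < m+2 then F (k-2) else 0) * (u^k * v^(n+1-k)) :=
  pad_gen (n+1+1) m 2 h F (fun k => u^k * v^(n+1-k))

lemma step1 (α β x : ℝ) (n k : ℕ) (hk : k ≤ n) :
    (2*(n:ℝ)+α+β+1) *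
      ((1 - x^2) * (ap α β n k * ((k:ℝ) * (1/2) * ((x-1)/2)^(k-1) * ((x+1)/2)^(n-k)
          + ((n-k : ℕ):ℝ) * (1/2) * ((x-1)/2)^k * ((x+1)/2)^(n-k-1)))
        - 1/2*(α-β+(α+β+2)*x) * (ap α β n k * ((x-1)/2)^k * ((x+1)/2)^(n-k)))
    = ((2*(n:ℝ)+α+β+1) * (-(ap α β n k * (2*(k:ℝ)+α+1)))) * (((x-1)/2)^k * ((x+1)/2)^(n+1-k))
      + ((2*(n:ℝ)+α+β+1) * (-(ap α β n k * (2*((n-k:ℕ):ℝ)+β+1)))) *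
          (((x-1)/2)^(k+1) * ((x+1)/2)^(n+1-(k+1))) := by
  obtain ⟨d, rfl⟩ : ∃ d, n = k + d := ⟨n-k, by omega⟩
  rw [show k+d-k = d from by omega, show k+d+1-k = d+1 from by omega,
    show k+d+1-(k+1) = d from by omega]
  cases' k with k' <;> cases' d with d' <;>
    simp only [Nat.zero_sub, Nat.add_sub_cancel, Nat.cast_zero, Nat.cast_add, Nat.cast_one,
      pow_zero, Nat.sub_zero] <;> push_cast <;> ring

lemma step4 (x a : ℝ) (n k : ℕ) (hk : k < n) :
    a * ((x-1)/2)^k * ((x+1)/2)^(n-1-k)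
      = a * (((x-1)/2)^k * ((x+1)/2)^(n+1-k))
        - 2*(a * (((x-1)/2)^(k+1) * ((x+1)/2)^(n+1-(k+1))))
        + a * (((x-1)/2)^(k+2) * ((x+1)/2)^(n+1-(k+2))) := by
  obtain ⟨e, rfl⟩ : ∃ e, n = k + e + 1 := ⟨n-k-1, by omega⟩
  rw [show k+e+1-1-k = e from by omega, show k+e+1+1-k = e+2 from by omega,
    show k+e+1+1-(k+1) = e+1 from by omega, show k+e+1+1-(k+2) = e from by omega]
  ring


set_option maxHeartbeats 1000000 in
/-- **Structure relation for Jacobi polynomials**, equation (3.8) of the paper. -/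
theorem jacobi_structure_relation (α β : ℝ) (hα : -1 < α) (hβ : -1 < β)
    (n : ℕ) (hn : 1 ≤ n) (x : ℝ) :
    (1 - x ^ 2) * (derivative (jacobiP α β n)).eval x -
        (1 / 2) * (α - β + (α + β + 2) * x) * (jacobiP α β n).eval x =
      -(((n : ℝ) + 1) * ((n : ℝ) + α + β + 1) / (2 * (n : ℝ) + α + β + 1)) *
          (jacobiP α β (n + 1)).eval x +
        (((n : ℝ) + α) * ((n : ℝ) + β) / (2 * (n : ℝ) + α + β + 1)) *
          (jacobiP α β (n - 1)).eval x := by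
  have hn' : (1:ℝ) ≤ (n:ℝ) := by exact_mod_cast hn
  have hD0 : (2*(n:ℝ)+α+β+1) ≠ 0 := ne_of_gt (by linarith)
  apply mul_left_cancel₀ hD0
  have hsc : ∀ p q : ℝ,
      (2*(n:ℝ)+α+β+1) * (-(((n:ℝ)+1) * ((n:ℝ)+α+β+1) / (2*(n:ℝ)+α+β+1)) * p
        + ((n:ℝ)+α) * ((n:ℝ)+β) / (2*(n:ℝ)+α+β+1) * q)
      = (-(((n:ℝ)+1)*((n:ℝ)+α+β+1))) * p + (((n:ℝ)+α)*((n:ℝ)+β)) * q := by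
    intro p q; field_simp
  have hS4 : ∑ k ∈ range n, ap α β (n-1) k * ((x-1)/2)^k * ((x+1)/2)^(n-1-k)
      = ∑ k ∈ range (n+1+1),
          ((if k < n then ap α β (n-1) k else 0)
            - 2*(if 1 ≤ k ∧ k < n+1 then ap α β (n-1) (k-1) else 0)
            + (if 2 ≤ k ∧ k < n+2 then ap α β (n-1) (k-2) else 0))
            * (((x-1)/2)^k * ((x+1)/2)^(n+1-k)) := by
    refine (Finset.sum_congr rfl fun k hk =>
      step4 x (ap α β (n-1) k) n k (mem_range.mp hk)).trans ?_
    rw [Finset.sum_add_distrib, Finset.sum_sub_distrib, ← Finset.mul_sum]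
    simp only [pad0 ((x-1)/2) ((x+1)/2) n n (by omega) (fun k => ap α β (n-1) k),
      pad1 ((x-1)/2) ((x+1)/2) n n (by omega) (fun k => ap α β (n-1) k),
      pad2 ((x-1)/2) ((x+1)/2) n n (by omega) (fun k => ap α β (n-1) k)]
    rw [Finset.mul_sum, ← Finset.sum_sub_distrib, ← Finset.sum_add_distrib]
    exact Finset.sum_congr rfl fun k _ => by ring
  have hleft : (2*(n:ℝ)+α+β+1) *
      ((1 - x ^ 2) * (∑ k ∈ range (n+1), ap α β n k *
          ((k:ℝ) * (1/2) * ((x-1)/2)^(k-1) * ((x+1)/2)^(n-k)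
            + ((n-k : ℕ):ℝ) * (1/2) * ((x-1)/2)^k * ((x+1)/2)^(n-k-1)))
        - 1 / 2 * (α - β + (α + β + 2) * x) *
            (∑ k ∈ range (n+1), ap α β n k * ((x-1)/2)^k * ((x+1)/2)^(n-k)))
      = ∑ k ∈ range (n+1+1),
          ((if k < n+1 then (2*(n:ℝ)+α+β+1) * (-(ap α β n k * (2*(k:ℝ)+α+1))) else 0)
            + (if 1 ≤ k ∧ k < (n+1)+1 then
                (2*(n:ℝ)+α+β+1) * (-(ap α β n (k-1) * (2*((n-(k-1):ℕ):ℝ)+β+1))) else 0))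
            * (((x-1)/2)^k * ((x+1)/2)^(n+1-k)) := by
    rw [Finset.mul_sum, Finset.mul_sum, ← Finset.sum_sub_distrib, Finset.mul_sum]
    refine (Finset.sum_congr rfl fun k hk =>
      step1 α β x n k (Nat.lt_succ_iff.mp (mem_range.mp hk))).trans ?_
    rw [Finset.sum_add_distrib]
    simp only [pad0 ((x-1)/2) ((x+1)/2) n (n+1) (by omega)
        (fun k => (2*(n:ℝ)+α+β+1) * (-(ap α β n k * (2*(k:ℝ)+α+1)))),
      pad1 ((x-1)/2) ((x+1)/2) n (n+1) (by omega)
        (fun k => (2*(n:ℝ)+α+β+1) * (-(ap α β n k * (2*((n-k:ℕ):ℝ)+β+1))))]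
    rw [← Finset.sum_add_distrib]
    exact Finset.sum_congr rfl fun k _ => (add_mul _ _ _).symm
  rw [hsc, eval_jacobiP α β (n+1) x, eval_jacobiP α β (n-1) x, show n-1+1 = n from by omega,
    hS4, eval_deriv_jacobiP α β n x, eval_jacobiP α β n x, hleft]
  rw [Finset.mul_sum, Finset.mul_sum, ← Finset.sum_add_distrib]
  refine Finset.sum_congr rfl fun k hk => ?_
  have h := key_coeff α β n k hn (mem_range.mp hk)
  linear_combination (((x-1)/2)^k * ((x+1)/2)^(n+1-k)) * h
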